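/- Let 0 < ρ < 1 and set G(z) = ρ z / (1 − ρ z). Then 1 + 2 Re G(z) > 0 for all z ∈ 𝔻, and for every r ∈ (0, 1): N_G(r) = r²/(1−r²) − ρ² r²/(1 − ρ² r²). -/

import Mathlib

open Complex MeasureTheory

/-- The Edelman–Kostlan integral: the expected number of zeros in `𝔻(r)` of the GAF
associated with `G(z) = Σ_{k≥1} conj(γ(k)) z^k`. -/
noncomputable def NG (G : ℂ → ℂ) (r : ℝ) : ℝ :=
  (1 / Real.pi) * ∫ z in Metric.ball (0 : ℂ) r,
    (1 / (1 - ‖z‖ ^ 2) ^ 2 - ‖deriv G z‖ ^ 2 / (1 + 2 * (G z).re) ^ 2)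

open Set

noncomputable def gOU (ρ y : ℝ) : ℝ := 1 / (1 - y ^ 2) ^ 2 - ρ ^ 2 / (1 - ρ ^ 2 * y ^ 2) ^ 2

lemma aux_ne (ρ : ℝ) (hρ0 : 0 < ρ) (hρ1 : ρ < 1) (z : ℂ) (hz : ‖z‖ < 1) :
    (1 - (ρ:ℂ) * z) ≠ 0 := by
  intro h
  have h2 : ‖(ρ:ℂ) * z‖ < 1 := by
    rw [norm_mul, Complex.norm_real]
    calc ‖ρ‖ * ‖z‖ ≤ 1 * ‖z‖ := by
          apply mul_le_mul_of_nonneg_right _ (norm_nonneg z)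
          rw [Real.norm_eq_abs, abs_of_pos hρ0]; exact hρ1.le
      _ < 1 := by simpa
  rw [sub_eq_zero] at h
  rw [← h] at h2; simp at h2

lemma aux_re (ρ : ℝ) (hρ0 : 0 < ρ) (hρ1 : ρ < 1) (z : ℂ) (hz : ‖z‖ < 1) :
    1 + 2 * (((ρ:ℂ) * z / (1 - (ρ:ℂ) * z)).re)
      = (1 - ρ ^ 2 * normSq z) / normSq (1 - (ρ:ℂ) * z) := by
  have hw := aux_ne ρ hρ0 hρ1 z hz
  have hn : normSq (1 - (ρ:ℂ) * z) ≠ 0 := by simpa [Complex.normSq_eq_zero] using hw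
  rw [Complex.div_re]
  simp only [Complex.normSq_apply, Complex.sub_re, Complex.sub_im, Complex.mul_re, Complex.mul_im,
    Complex.one_re, Complex.one_im, Complex.ofReal_re, Complex.ofReal_im] at *
  ring_nf at hn ⊢
  field_simp
  ring

lemma aux_nz_pos (ρ : ℝ) (hρ0 : 0 < ρ) (hρ1 : ρ < 1) (z : ℂ) (hz : ‖z‖ < 1) :
    0 < 1 - ρ ^ 2 * normSq z := by
  have h1 : normSq z < 1 := by
    have h := Complex.sq_norm z
    nlinarith [norm_nonneg z]
  nlinarith [normSq_nonneg z]

lemma aux_pos (ρ : ℝ) (hρ0 : 0 < ρ) (hρ1 : ρ < 1) (z : ℂ) (hz : ‖z‖ < 1) :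
    0 < 1 + 2 * (((ρ:ℂ) * z / (1 - (ρ:ℂ) * z)).re) := by
  rw [aux_re ρ hρ0 hρ1 z hz]
  have hw := aux_ne ρ hρ0 hρ1 z hz
  have hn : 0 < normSq (1 - (ρ:ℂ) * z) := by
    simpa [Complex.normSq_pos] using hw
  exact div_pos (aux_nz_pos ρ hρ0 hρ1 z hz) hn

lemma aux_deriv (ρ : ℝ) (z : ℂ) (hw : (1 - (ρ:ℂ) * z) ≠ 0) :
    deriv (fun z => (ρ : ℂ) * z / (1 - (ρ : ℂ) * z)) z = (ρ:ℂ) / (1 - (ρ:ℂ) * z) ^ 2 := by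
  have h1 : HasDerivAt (fun z : ℂ => (ρ:ℂ) * z) (ρ:ℂ) z := by
    simpa using (hasDerivAt_id z).const_mul (ρ:ℂ)
  have h2 : HasDerivAt (fun z : ℂ => 1 - (ρ:ℂ) * z) (-(ρ:ℂ)) z := by
    simpa using h1.const_sub 1
  rw [show (fun z => (ρ:ℂ) * z / (1 - (ρ:ℂ) * z)) = (fun z => (ρ:ℂ) * z) / (fun z => 1 - (ρ:ℂ) * z) from rfl, (h1.div h2 hw).deriv]
  field_simp
  ring

lemma aux_integrand (ρ : ℝ) (hρ0 : 0 < ρ) (hρ1 : ρ < 1) (z : ℂ) (hz : ‖z‖ < 1) :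
    1 / (1 - ‖z‖ ^ 2) ^ 2
      - ‖deriv (fun z => (ρ : ℂ) * z / (1 - (ρ : ℂ) * z)) z‖ ^ 2
        / (1 + 2 * (((ρ:ℂ) * z / (1 - (ρ:ℂ) * z)).re)) ^ 2
      = gOU ρ ‖z‖ := by
  have hw := aux_ne ρ hρ0 hρ1 z hz
  have hn : normSq (1 - (ρ:ℂ) * z) ≠ 0 := by simpa [Complex.normSq_eq_zero] using hw
  have hzz : normSq z = ‖z‖ ^ 2 := by
    rw [Complex.sq_norm]
  have hnd : ‖deriv (fun z => (ρ : ℂ) * z / (1 - (ρ : ℂ) * z)) z‖ ^ 2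
      = ρ ^ 2 / normSq (1 - (ρ:ℂ) * z) ^ 2 := by
    rw [aux_deriv ρ z hw, Complex.sq_norm, Complex.normSq_div, map_pow]
    congr 1
    simp [Complex.normSq_apply]
    ring
  rw [hnd, aux_re ρ hρ0 hρ1 z hz, gOU, ← hzz]
  have hpos := aux_nz_pos ρ hρ0 hρ1 z hz
  have hn2 : (normSq (1 - (ρ:ℂ) * z)) ^ 2 ≠ 0 := pow_ne_zero _ hn
  have hp2 : (1 - ρ ^ 2 * normSq z) ^ 2 ≠ 0 := pow_ne_zero _ hpos.ne'
  congr 1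
  rw [div_pow, div_div_div_cancel_right₀ hn2]



noncomputable def FOU (ρ y : ℝ) : ℝ := 1 / (2 * (1 - y ^ 2)) - 1 / (2 * (1 - ρ ^ 2 * y ^ 2))

lemma aux_ftc (ρ r : ℝ) (hρ0 : 0 < ρ) (hρ1 : ρ < 1) (hr0 : 0 < r) (hr1 : r < 1) :
    ∫ y in (0:ℝ)..r, y * gOU ρ y = FOU ρ r - FOU ρ 0 := by
  apply intervalIntegral.integral_eq_sub_of_hasDerivAt
  · intro x hx
    rw [Set.uIcc_of_le hr0.le] at hx
    have hx0 : 0 ≤ x := hx.1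
    have hx1 : x < 1 := lt_of_le_of_lt hx.2 hr1
    have hpx0 : 0 ≤ ρ * x := mul_nonneg hρ0.le hx0
    have hpx1 : ρ * x < 1 := by nlinarith
    have e1 : (1 - x ^ 2) ≠ 0 := by nlinarith
    have e2 : (1 - ρ ^ 2 * x ^ 2) ≠ 0 := by nlinarith [sq_nonneg (ρ * x)]
    have d1 : HasDerivAt (fun y : ℝ => 2 * (1 - y ^ 2)) (2 * (-(2 * x))) x := by
      have : HasDerivAt (fun y : ℝ => 1 - y ^ 2) (-(2 * x)) x := by
        simpa using (hasDerivAt_pow 2 x).const_sub 1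
      exact this.const_mul 2
    have d2 : HasDerivAt (fun y : ℝ => 2 * (1 - ρ ^ 2 * y ^ 2)) (2 * (-(ρ ^ 2 * (2 * x)))) x := by
      have : HasDerivAt (fun y : ℝ => 1 - ρ ^ 2 * y ^ 2) (-(ρ ^ 2 * (2 * x))) x := by
        simpa [mul_comm] using ((hasDerivAt_pow 2 x).const_mul (ρ ^ 2)).const_sub 1
      exact this.const_mul 2
    have h1 := (hasDerivAt_const x (1:ℝ)).div d1 (by simpa using e1)
    have h2 := (hasDerivAt_const x (1:ℝ)).div d2 (by simpa using e2)
    have := h1.sub h2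
    convert this using 1
    · rfl
    rw [gOU]
    field_simp
    ring
  · apply ContinuousOn.intervalIntegrable
    apply ContinuousOn.mul continuousOn_id
    apply ContinuousOn.sub
    · exact ContinuousOn.div continuousOn_const
        (((continuous_const.sub (continuous_pow 2)).pow 2).continuousOn)
        (fun x hx => by
          rw [Set.uIcc_of_le hr0.le] at hx
          have h1 : x < 1 := lt_of_le_of_lt hx.2 hr1
          have h2 := hx.1
          have : (0:ℝ) < 1 - x ^ 2 := by nlinarith
          exact pow_ne_zero 2 this.ne')
    · exact ContinuousOn.div continuousOn_const
        (((continuous_const.sub (continuous_const.mul (continuous_pow 2))).pow 2).continuousOn)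
        (fun x hx => by
          rw [Set.uIcc_of_le hr0.le] at hx
          have h1 : x < 1 := lt_of_le_of_lt hx.2 hr1
          have h2 := hx.1
          have hpx0 : 0 ≤ ρ * x := mul_nonneg hρ0.le h2
          have hpx1 : ρ * x < 1 := by nlinarith
          have : (0:ℝ) < 1 - ρ ^ 2 * x ^ 2 := by nlinarith [sq_nonneg (ρ * x)]
          exact pow_ne_zero 2 this.ne')

lemma aux_radial (ρ r : ℝ) (hρ0 : 0 < ρ) (hρ1 : ρ < 1) (hr0 : 0 < r) (hr1 : r < 1) :
    ∫ z in Metric.ball (0:ℂ) r, gOU ρ ‖z‖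
      = Real.pi * (2 * (FOU ρ r - FOU ρ 0)) := by
  have h1 : (fun z : ℂ => (Set.Iio r).indicator (gOU ρ) ‖z‖)
      = (Metric.ball (0:ℂ) r).indicator (fun z => gOU ρ ‖z‖) := by
    funext z
    by_cases h : ‖z‖ < r <;>
      simp [Set.indicator, mem_ball_zero_iff, h]
  rw [← integral_indicator measurableSet_ball, ← h1,
    integral_fun_norm_addHaar (volume : Measure ℂ) ((Set.Iio r).indicator (gOU ρ))]
  have h2 : ∫ y in Ioi (0:ℝ), y ^ (Module.finrank ℝ ℂ - 1) • (Set.Iio r).indicator (gOU ρ) y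
      = FOU ρ r - FOU ρ 0 := by
    have h3 : ∀ y : ℝ, y ^ (Module.finrank ℝ ℂ - 1) • (Set.Iio r).indicator (gOU ρ) y
        = (Set.Iio r).indicator (fun y => y * gOU ρ y) y := by
      intro y
      by_cases h : y < r <;>
        simp [Set.indicator, h, Complex.finrank_real_complex]
    simp_rw [h3]
    rw [setIntegral_indicator measurableSet_Iio, Set.Ioi_inter_Iio,
      ← MeasureTheory.integral_Ioc_eq_integral_Ioo,
      ← intervalIntegral.integral_of_le hr0.le]
    exact aux_ftc ρ r hρ0 hρ1 hr0 hr1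
  rw [h2, Complex.finrank_real_complex, Measure.real, Complex.volume_ball]
  simp [ENNReal.toReal_mul, NNReal.coe_real_pi]
  ring

open Set in
/-- Ornstein–Uhlenbeck coefficients: for `G(z) = ρz/(1-ρz)`,
`N_G(r) = r²/(1-r²) - ρ²r²/(1-ρ²r²)` for every `r ∈ (0,1)`. -/
theorem stmt_11 (ρ : ℝ) (hρ0 : 0 < ρ) (hρ1 : ρ < 1)
    (G : ℂ → ℂ) (hG : ∀ z : ℂ, G z = (ρ : ℂ) * z / (1 - (ρ : ℂ) * z)) :
    (∀ z ∈ Metric.ball (0 : ℂ) 1, 0 < 1 + 2 * (G z).re) ∧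
    ∀ r : ℝ, 0 < r → r < 1 →
      NG G r = r ^ 2 / (1 - r ^ 2) - ρ ^ 2 * r ^ 2 / (1 - ρ ^ 2 * r ^ 2) := by
  have hGe : G = fun z => (ρ : ℂ) * z / (1 - (ρ : ℂ) * z) := funext hG
  subst hGe
  constructor
  · intro z hz
    exact aux_pos ρ hρ0 hρ1 z (by simpa using mem_ball_zero_iff.mp hz)
  · intro r hr0 hr1
    have hEq : Set.EqOn
        (fun z : ℂ => 1 / (1 - ‖z‖ ^ 2) ^ 2
          - ‖deriv (fun z => (ρ : ℂ) * z / (1 - (ρ : ℂ) * z)) z‖ ^ 2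
            / (1 + 2 * (((ρ:ℂ) * z / (1 - (ρ:ℂ) * z)).re)) ^ 2)
        (fun z : ℂ => gOU ρ ‖z‖) (Metric.ball (0:ℂ) r) := by
      intro z hz
      exact aux_integrand ρ hρ0 hρ1 z (lt_trans (mem_ball_zero_iff.mp hz) hr1)
    rw [NG, setIntegral_congr_fun measurableSet_ball hEq, aux_radial ρ r hρ0 hρ1 hr0 hr1]
    have e1 : (1 - r ^ 2) ≠ 0 := by nlinarith
    have hpx1 : ρ * r < 1 := by nlinarith
    have e2 : (1 - ρ ^ 2 * r ^ 2) ≠ 0 := by nlinarith [sq_nonneg (ρ * r), mul_pos hρ0 hr0]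
    rw [FOU, FOU]
    have e3 : 1 - r ^ 2 * ρ ^ 2 ≠ 0 := by rw [mul_comm]; exact e2
    norm_num
    field_simp
    ring
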